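/- Define f₀(p) = 3(p²+2p+3)² − 2^{2/3}·e(p) − 2·2^{1/3}(6p²+12p+31)/e(p) + 8 where e(p) = (27p⁴+108p³+252p²+3√3·√((p+1)⁴(27p⁴+108p³+310p²+404p+575))+288p+367)^{1/3}. Then f₀(p) > 0 for all nonnegative integers p. In particular f₀(0) = −62·(2/(15√69+367))^{1/3} − 2^{2/3}(15√69+367)^{1/3} + 35 > 0. -/

import Mathlib

noncomputable def e7 (p : ℝ) : ℝ :=
  (27*p^4 + 108*p^3 + 252*p^2
    + 3*Real.sqrt 3 * Real.sqrt ((p+1)^4*(27*p^4+108*p^3+310*p^2+404*p+575))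
    + 288*p + 367) ^ ((1 : ℝ)/3)

noncomputable def f0 (p : ℝ) : ℝ :=
  3*(p^2+2*p+3)^2 - (2:ℝ)^((2:ℝ)/3) * e7 p
    - 2*(2:ℝ)^((1:ℝ)/3)*(6*p^2+12*p+31) / e7 p + 8

set_option maxHeartbeats 1000000 in
lemma f0_pos_of_nonneg (p : ℝ) (hp : 0 ≤ p) : 0 < f0 p := by
  set Q : ℝ := 27*p^4+108*p^3+310*p^2+404*p+575 with hQdef
  set S : ℝ := 27*p^4 + 108*p^3 + 252*p^2 + 288*p + 367 with hSdef
  set B : ℝ := 6*p^2+12*p+31 with hBdef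
  set D : ℝ := 3*Real.sqrt 3 * Real.sqrt ((p+1)^4*Q) with hDdef
  have hp2 : (0:ℝ) ≤ p^2 := pow_nonneg hp 2
  have hp3 : (0:ℝ) ≤ p^3 := pow_nonneg hp 3
  have hp4 : (0:ℝ) ≤ p^4 := pow_nonneg hp 4
  have hQ : (0:ℝ) ≤ (p+1)^4*Q := by
    have h1 : (0:ℝ) ≤ (p+1)^4 := by positivity
    have h2 : (0:ℝ) ≤ Q := by rw [hQdef]; nlinarith
    exact mul_nonneg h1 h2
  have hD : 0 ≤ D := by
    rw [hDdef]
    have := Real.sqrt_nonneg (3:ℝ)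
    have := Real.sqrt_nonneg ((p+1)^4*Q)
    positivity
  have hD2 : D^2 = 27*((p+1)^4*Q) := by
    rw [hDdef]
    have h3 : Real.sqrt 3 ^ 2 = 3 := Real.sq_sqrt (by norm_num)
    have h4 : Real.sqrt ((p+1)^4*Q) ^ 2 = (p+1)^4*Q := Real.sq_sqrt hQ
    nlinarith [h3, h4]
  have hS : 0 < S := by rw [hSdef]; nlinarith
  have hB : 0 < B := by rw [hBdef]; nlinarith
  have hz : 0 < S + D := by linarith
  have hE : e7 p = (S + D) ^ ((1:ℝ)/3) := by
    unfold e7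
    congr 1
    rw [hSdef, hDdef]
    ring
  set E : ℝ := e7 p with hEdef
  have hEpos : 0 < E := by
    rw [hE]; exact Real.rpow_pos_of_pos hz _
  have hE3 : E^3 = S + D := by
    rw [hE, ← Real.rpow_natCast ((S+D) ^ ((1:ℝ)/3)) 3, ← Real.rpow_mul hz.le]
    norm_num
  -- key product identity
  have hSD : (S + D) * (S - D) = 4 * B^3 := by
    have h : S^2 - D^2 = 4*B^3 := by
      rw [hD2, hSdef, hBdef, hQdef]; ring
    linear_combination h
  set u : ℝ := (2:ℝ)^((2:ℝ)/3) * E with hudef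
  set v : ℝ := 2*(2:ℝ)^((1:ℝ)/3)*B/E with hvdef
  have h213 : ((2:ℝ)^((1:ℝ)/3))^3 = 2 := by
    rw [← Real.rpow_natCast ((2:ℝ) ^ ((1:ℝ)/3)) 3, ← Real.rpow_mul (by norm_num : (0:ℝ) ≤ 2)]
    norm_num
  have h223 : ((2:ℝ)^((2:ℝ)/3))^3 = 4 := by
    rw [← Real.rpow_natCast ((2:ℝ) ^ ((2:ℝ)/3)) 3, ← Real.rpow_mul (by norm_num : (0:ℝ) ≤ 2)]
    norm_num
  have hr13 : (0:ℝ) < (2:ℝ)^((1:ℝ)/3) := Real.rpow_pos_of_pos (by norm_num) _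
  have hr23 : (0:ℝ) < (2:ℝ)^((2:ℝ)/3) := Real.rpow_pos_of_pos (by norm_num) _
  have huv : u * v = 4 * B := by
    rw [hudef, hvdef]
    have hmul : (2:ℝ)^((2:ℝ)/3) * (2:ℝ)^((1:ℝ)/3) = 2 := by
      rw [← Real.rpow_add (by norm_num : (0:ℝ) < 2)]
      norm_num
    field_simp
    linear_combination 2 * hmul
  have hu3 : u^3 = 4*(S + D) := by
    rw [hudef, mul_pow, h223, hE3]
  have hv3 : v^3 = 4*(S - D) := by
    have h1 : v^3 * (S + D) = 16 * B^3 := by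
      rw [hvdef, div_pow, hE3, div_mul_cancel₀ _ hz.ne', mul_pow, mul_pow, h213]
      ring
    have h2 : (4*(S - D)) * (S + D) = 16 * B^3 := by linarith [hSD]
    exact mul_right_cancel₀ hz.ne' (h1.trans h2.symm)
  set x : ℝ := u + v with hxdef
  have hupos : 0 < u := by rw [hudef]; positivity
  have hvpos : 0 < v := by rw [hvdef]; positivity
  have hxpos : 0 < x := by rw [hxdef]; linarith
  have hx3 : x^3 = 12*B*x + 8*S := by
    rw [hxdef]
    have : (u+v)^3 = u^3 + v^3 + 3*(u*v)*(u+v) := by ring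
    rw [this, hu3, hv3, huv]
    ring
  have hx2 : 16*B ≤ x^2 := by
    rw [hxdef]
    nlinarith [sq_nonneg (u - v), huv]
  set A : ℝ := 3*(p^2+2*p+3)^2 + 8 with hAdef
  have hApos : 0 < A := by rw [hAdef]; positivity
  have hA : 12*B*A + 8*S < A^3 := by
    have hexp : A^3 - (12*B*A + 8*S) =
        26919 + 111564*p + 225450*p^2 + 305316*p^3 + 307665*p^4 + 240840*p^5
        + 150228*p^6 + 74952*p^7 + 29781*p^8 + 9180*p^9 + 2106*p^10 + 324*p^11
        + 27*p^12 := by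
      rw [hAdef, hBdef, hSdef]; ring
    have hp5 : (0:ℝ) ≤ p^5 := pow_nonneg hp 5
    have hp6 : (0:ℝ) ≤ p^6 := pow_nonneg hp 6
    have hp7 : (0:ℝ) ≤ p^7 := pow_nonneg hp 7
    have hp8 : (0:ℝ) ≤ p^8 := pow_nonneg hp 8
    have hp9 : (0:ℝ) ≤ p^9 := pow_nonneg hp 9
    have hp10 : (0:ℝ) ≤ p^10 := pow_nonneg hp 10
    have hp11 : (0:ℝ) ≤ p^11 := pow_nonneg hp 11
    have hp12 : (0:ℝ) ≤ p^12 := pow_nonneg hp 12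
    linarith [hexp, hp, hp2, hp3, hp4, hp5, hp6, hp7, hp8, hp9, hp10, hp11, hp12]
  have hxA : x < A := by
    by_contra hcon
    push_neg at hcon
    have h1 : 0 ≤ (x - A) * (x^2 - 16*B) :=
      mul_nonneg (by linarith) (by linarith)
    nlinarith [hx3, hA, mul_pos hApos hxpos, sq_nonneg (x - A), mul_nonneg (sub_nonneg.mpr hcon) (sq_nonneg A)]
  have hf : f0 p = A - x := by
    unfold f0
    rw [← hEdef, hxdef, hudef, hvdef, hAdef, hBdef]
    ring
  rw [hf]
  linarith

theorem stmt7 :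
    (∀ p : ℕ, 0 < f0 (p : ℝ)) ∧
    f0 0 = -62*(2/(15*Real.sqrt 69+367))^((1:ℝ)/3)
            - (2:ℝ)^((2:ℝ)/3)*(15*Real.sqrt 69+367)^((1:ℝ)/3) + 35 ∧
    0 < f0 0 := by
  have hall : ∀ p : ℕ, 0 < f0 (p : ℝ) := fun p => f0_pos_of_nonneg _ (Nat.cast_nonneg p)
  refine ⟨hall, ?_, by simpa using hall 0⟩
  have hc : 0 < 15*Real.sqrt 69 + 367 := by
    nlinarith [Real.sqrt_nonneg (69:ℝ)]
  have hsqrt : 3*Real.sqrt 3 * Real.sqrt (((0:ℝ)+1)^4*(27*0^4+108*0^3+310*0^2+404*0+575))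
      = 15 * Real.sqrt 69 := by
    norm_num
    rw [mul_assoc, ← Real.sqrt_mul (by norm_num : (0:ℝ) ≤ 3)]
    rw [show (3*575 : ℝ) = 25 * 69 by norm_num,
      Real.sqrt_mul (by norm_num : (0:ℝ) ≤ 25),
      show Real.sqrt 25 = 5 by
        rw [show (25:ℝ) = 5^2 by norm_num, Real.sqrt_sq (by norm_num)]]
    ring
  have he70 : e7 0 = (15*Real.sqrt 69 + 367) ^ ((1:ℝ)/3) := by
    unfold e7
    norm_num at hsqrt ⊢
    rw [hsqrt]
  have hdiv : (2/(15*Real.sqrt 69+367)) ^ ((1:ℝ)/3)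
      = (2:ℝ)^((1:ℝ)/3) / (15*Real.sqrt 69+367) ^ ((1:ℝ)/3) :=
    Real.div_rpow (by norm_num) hc.le _
  have hcpos : 0 < (15*Real.sqrt 69 + 367) ^ ((1:ℝ)/3) := Real.rpow_pos_of_pos hc _
  unfold f0
  rw [he70, hdiv]
  field_simp
  ring
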